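/- For all real numbers d and s such that −1 ≤ d ≤ 1, 3 + 2d − 2s ≥ 0, and 3 + 2d + 2s ≥ 0, one has √(3 + 2d − 2s) + √(3 + 2d + 2s) + √(2 − 2d) ≤ 5, with equality when s = 0 and d = 1/2. -/

import Mathlib

/-- For real `d ∈ [-1,1]` and `s` with `3 + 2d - 2s ≥ 0` and
`3 + 2d + 2s ≥ 0`, one has `√(3+2d-2s) + √(3+2d+2s) + √(2-2d) ≤ 5`, with equality
when `s = 0` and `d = 1/2`. -/
theorem i3322_bound (d s : ℝ) (hd : -1 ≤ d) (hd' : d ≤ 1)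
    (h₁ : 0 ≤ 3 + 2 * d - 2 * s) (h₂ : 0 ≤ 3 + 2 * d + 2 * s) :
    Real.sqrt (3 + 2 * d - 2 * s) + Real.sqrt (3 + 2 * d + 2 * s) +
      Real.sqrt (2 - 2 * d) ≤ 5 ∧
    (s = 0 ∧ d = 1 / 2 →
      Real.sqrt (3 + 2 * d - 2 * s) + Real.sqrt (3 + 2 * d + 2 * s) +
        Real.sqrt (2 - 2 * d) = 5) := by
  constructor
  · set a := Real.sqrt (3 + 2 * d - 2 * s)
    set b := Real.sqrt (3 + 2 * d + 2 * s)
    set c := Real.sqrt (2 - 2 * d)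
    have ha : a ^ 2 = 3 + 2 * d - 2 * s := Real.sq_sqrt h₁
    have hb : b ^ 2 = 3 + 2 * d + 2 * s := Real.sq_sqrt h₂
    have hc : c ^ 2 = 2 - 2 * d := Real.sq_sqrt (by linarith)
    nlinarith [sq_nonneg (a - 2), sq_nonneg (b - 2), sq_nonneg (c - 1)]
  · rintro ⟨rfl, rfl⟩
    norm_num
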